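/- Let ρ_1,…,ρ_m ∈ ℤ^d generate a pointed real cone C = {Σ_i c_i ρ_i : c_i ≥ 0} ⊆ ℝ^d, let Q = C ∩ ℤ^d, and let G = {Σ_i t_i ρ_i : 0 ≤ t_i ≤ 1} be the associated zonotope. Let τ : ℤ^d → ℤ be a ℤ-linear functional (extended ℝ-linearly to ℝ^d) with τ ≥ 0 on Q, such that F := Q ∩ ker τ is a facet of Q (the ℝ-linear span of F has dimension d − 1). Fix a ∈ Q. Then every b ∈ Q with τ(b) > τ(a) can be written b = b₀ + q, where q ∈ Q and b₀ is a lattice point of the Minkowski sum (({x ∈ ℝ^d : τ(x) = τ(a)}) ∩ ℝ₊D) + G for some face D of Q satisfying D ∩ F = {0}; here ℝ₊D denotes the set of nonnegative real combinations of elements of D. -/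

import Mathlib

open Pointwise

/-- Coercion of a lattice point in `ℤ^d` to a point of `ℝ^d`. -/
def toR {d : ℕ} (x : Fin d → ℤ) : Fin d → ℝ := fun i => (x i : ℝ)

/-- `F` is a face of the affine semigroup (given as a subset of `ℤ^d`) `Q`:
it is cut out of `Q` by a `ℤ`-linear functional that is nonnegative on `Q`. -/
def IsFaceOf {d : ℕ} (Q F : Set (Fin d → ℤ)) : Prop :=
  ∃ lam : (Fin d → ℤ) →ₗ[ℤ] ℤ, (∀ q ∈ Q, 0 ≤ lam q) ∧ F = {q | q ∈ Q ∧ lam q = 0}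

/-- The `ℝ`-linear extension of a `ℤ`-linear functional on `ℤ^d` to `ℝ^d`. -/
def extR {d : ℕ} (τ : (Fin d → ℤ) →ₗ[ℤ] ℤ) : (Fin d → ℝ) → ℝ :=
  fun y => ∑ i, y i * (τ (Pi.single i 1) : ℝ)

/-- `ℝ₊S`: the set of nonnegative real combinations of elements of `S ⊆ ℝ^d`. -/
def nonnegSpan {d : ℕ} (S : Set (Fin d → ℝ)) : Set (Fin d → ℝ) :=
  {y | ∃ (N : ℕ) (v : Fin N → (Fin d → ℝ)) (c : Fin N → ℝ),
    (∀ i, v i ∈ S) ∧ (∀ i, 0 ≤ c i) ∧ y = ∑ i, c i • v i}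


open Matrix

namespace Stmt3Aux

variable {F : Type*} [Field F] [LinearOrder F] [IsStrictOrderedRing F] {d : ℕ}

/-- The cone generated by finitely many vectors. -/
def cone {n : ℕ} (w : Fin n → Fin d → F) : Set (Fin d → F) :=
  {y | ∃ c : Fin n → F, (∀ i, 0 ≤ c i) ∧ y = ∑ i, c i • w i}

theorem farkas : ∀ (n : ℕ) (w : Fin n → Fin d → F) (y : Fin d → F),
    (∀ z : Fin d → F, (∀ i, 0 ≤ z ⬝ᵥ w i) → 0 ≤ z ⬝ᵥ y) → y ∈ cone w := by
  intro n
  induction n with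
  | zero =>
    intro w y h
    have h1 : y ⬝ᵥ y ≤ 0 := by
      have := h (-y) (fun i => i.elim0)
      simpa [neg_dotProduct] using this
    have h2 : 0 ≤ y ⬝ᵥ y := Finset.sum_nonneg fun i _ => mul_self_nonneg _
    have hy : y = 0 := by
      have hz : y ⬝ᵥ y = 0 := le_antisymm h1 h2
      funext i
      have := (Finset.sum_eq_zero_iff_of_nonneg (fun i _ => mul_self_nonneg (y i))).1 hz i
        (Finset.mem_univ i)
      exact mul_self_eq_zero.1 this
    exact ⟨0, fun i => le_refl _, by simp [hy]⟩
  | succ n IH =>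
    intro w y h
    by_cases hall : ∀ z : Fin d → F, (∀ i : Fin n, 0 ≤ z ⬝ᵥ w i.castSucc) → 0 ≤ z ⬝ᵥ y
    · obtain ⟨c, hc, hy⟩ := IH (fun i => w i.castSucc) y hall
      refine ⟨Fin.snoc c 0, ?_, ?_⟩
      · intro i
        refine Fin.lastCases ?_ ?_ i
        · simp
        · intro j; simpa using hc j
      · rw [Fin.sum_univ_castSucc]
        simpa using hy
    · push_neg at hall
      obtain ⟨z₀, hz₀w, hz₀y⟩ := hall
      set wn := w (Fin.last n) with hwn
      have hz₀wn : z₀ ⬝ᵥ wn < 0 := by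
        by_contra hge
        push_neg at hge
        have : ∀ i : Fin (n + 1), 0 ≤ z₀ ⬝ᵥ w i := by
          intro i
          refine Fin.lastCases ?_ ?_ i
          · exact hge
          · exact hz₀w
        exact absurd (h z₀ this) (not_le.2 hz₀y)
      have hα : z₀ ⬝ᵥ wn ≠ 0 := ne_of_lt hz₀wn
      set wh : Fin n → Fin d → F :=
        fun i => w i.castSucc - ((z₀ ⬝ᵥ w i.castSucc) / (z₀ ⬝ᵥ wn)) • wn with hwh
      set yh : Fin d → F := y - ((z₀ ⬝ᵥ y) / (z₀ ⬝ᵥ wn)) • wn with hyh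
      have key : ∀ (z : Fin d → F) (u : Fin d → F),
          z ⬝ᵥ (u - ((z₀ ⬝ᵥ u) / (z₀ ⬝ᵥ wn)) • wn)
            = (z - ((z ⬝ᵥ wn) / (z₀ ⬝ᵥ wn)) • z₀) ⬝ᵥ u := by
        intro z u
        rw [dotProduct_sub, dotProduct_smul, sub_dotProduct, smul_dotProduct]
        rw [smul_eq_mul, smul_eq_mul]
        field_simp
      obtain ⟨c, hc, hyheq⟩ := IH wh yh (by
        intro z hz
        set zh := z - ((z ⬝ᵥ wn) / (z₀ ⬝ᵥ wn)) • z₀ with hzh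
        have hzhwn : zh ⬝ᵥ wn = 0 := by
          rw [hzh, sub_dotProduct, smul_dotProduct, smul_eq_mul]
          field_simp
          ring
        have hzhw : ∀ i : Fin (n + 1), 0 ≤ zh ⬝ᵥ w i := by
          intro i
          refine Fin.lastCases ?_ ?_ i
          · rw [← hwn, hzhwn]
          · intro j
            have := hz j
            rwa [hwh, key z (w j.castSucc)] at this
        have := h zh hzhw
        rwa [hyh, key z y]
        )
      -- now assemble
      set μ := (z₀ ⬝ᵥ y - ∑ i, c i * (z₀ ⬝ᵥ w i.castSucc)) / (z₀ ⬝ᵥ wn) with hμ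
      have hμ0 : 0 ≤ μ := by
        apply div_nonneg_of_nonpos ?_ (le_of_lt hz₀wn)
        have h2 : 0 ≤ ∑ i, c i * (z₀ ⬝ᵥ w i.castSucc) :=
          Finset.sum_nonneg fun i _ => mul_nonneg (hc i) (hz₀w i)
        linarith
      refine ⟨Fin.snoc c μ, ?_, ?_⟩
      · intro i
        refine Fin.lastCases ?_ ?_ i
        · simpa using hμ0
        · intro j; simpa using hc j
      · rw [Fin.sum_univ_castSucc]
        simp only [Fin.snoc_castSucc, Fin.snoc_last]
        have hyeq : y = yh + ((z₀ ⬝ᵥ y) / (z₀ ⬝ᵥ wn)) • wn := by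
          rw [hyh]; abel
        rw [hyeq, hyheq]
        have expand : ∑ i, c i • wh i
            = ∑ i, c i • w i.castSucc - (∑ i, c i * ((z₀ ⬝ᵥ w i.castSucc) / (z₀ ⬝ᵥ wn))) • wn := by
          rw [Finset.sum_smul]
          rw [← Finset.sum_sub_distrib]
          congr 1
          funext i
          rw [hwh, smul_sub, smul_smul]
        rw [expand]
        have : (∑ i, c i * ((z₀ ⬝ᵥ w i.castSucc) / (z₀ ⬝ᵥ wn))) = 
            (∑ i, c i * (z₀ ⬝ᵥ w i.castSucc)) / (z₀ ⬝ᵥ wn) := by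
          rw [Finset.sum_div]
          congr 1; funext i; ring
        rw [this, hμ]
        rw [sub_div]
        module


theorem dot_sumv {ι : Type*} [Fintype ι] (z : Fin d → F) (f : ι → Fin d → F) :
    z ⬝ᵥ (∑ i, f i) = ∑ i, z ⬝ᵥ f i := by
  unfold dotProduct
  simp only [Finset.sum_apply, Finset.mul_sum]
  exact Finset.sum_comm

theorem dot_sumf {ι : Type*} (s : Finset ι) (z : Fin d → F) (f : ι → Fin d → F) :
    z ⬝ᵥ (∑ i ∈ s, f i) = ∑ i ∈ s, z ⬝ᵥ f i := by
  unfold dotProduct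
  simp only [Finset.sum_apply, Finset.mul_sum]
  exact Finset.sum_comm

theorem sep {n : ℕ} {w : Fin n → Fin d → F} {y : Fin d → F} (hy : y ∉ cone w) :
    ∃ z : Fin d → F, (∀ i, 0 ≤ z ⬝ᵥ w i) ∧ z ⬝ᵥ y < 0 := by
  by_contra hc
  push_neg at hc
  exact hy (farkas n w y hc)

theorem dot_nonneg_of_mem {n : ℕ} {w : Fin n → Fin d → F} {y : Fin d → F} {z : Fin d → F}
    (hz : ∀ i, 0 ≤ z ⬝ᵥ w i) (hy : y ∈ cone w) : 0 ≤ z ⬝ᵥ y := by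
  obtain ⟨c, hc, rfl⟩ := hy
  rw [show (∑ i, c i • w i) = ∑ i, (fun i => c i • w i) i from rfl, dot_sumv]
  refine Finset.sum_nonneg fun i _ => ?_
  rw [dotProduct_smul, smul_eq_mul]
  exact mul_nonneg (hc i) (hz i)

theorem zero_mem_cone {n : ℕ} (w : Fin n → Fin d → F) : (0 : Fin d → F) ∈ cone w :=
  ⟨0, fun _ => le_refl _, by simp⟩

theorem gen_mem_cone {n : ℕ} (w : Fin n → Fin d → F) (i : Fin n) : w i ∈ cone w := by
  classical
  refine ⟨fun j => if j = i then 1 else 0, fun j => by positivity, ?_⟩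
  have : ∀ j : Fin n, (if j = i then (1:F) else 0) • w j = if j = i then w j else 0 := by
    intro j; split <;> simp
  rw [Finset.sum_congr rfl (fun j _ => this j), Finset.sum_ite_eq' Finset.univ i w]
  simp

theorem add_mem_cone {n : ℕ} {w : Fin n → Fin d → F} {x y : Fin d → F}
    (hx : x ∈ cone w) (hy : y ∈ cone w) : x + y ∈ cone w := by
  obtain ⟨c, hc, rfl⟩ := hx
  obtain ⟨c', hc', rfl⟩ := hy
  exact ⟨c + c', fun i => add_nonneg (hc i) (hc' i), by
    rw [← Finset.sum_add_distrib]; congr 1; funext i; rw [Pi.add_apply, add_smul]⟩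

theorem smul_mem_cone {n : ℕ} {w : Fin n → Fin d → F} {x : Fin d → F} {t : F}
    (ht : 0 ≤ t) (hx : x ∈ cone w) : t • x ∈ cone w := by
  obtain ⟨c, hc, rfl⟩ := hx
  exact ⟨t • c, fun i => mul_nonneg ht (hc i), by
    rw [Finset.smul_sum]; congr 1; funext i
    rw [Pi.smul_apply, smul_smul, smul_eq_mul]⟩

theorem isClosed_cone {n : ℕ} (w : Fin n → Fin d → ℝ) : IsClosed (cone w) := by
  have : cone w = ⋂ z : {z : Fin d → ℝ // ∀ i, 0 ≤ z ⬝ᵥ w i}, {y | 0 ≤ (z : Fin d → ℝ) ⬝ᵥ y} := by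
    ext y
    simp only [Set.mem_iInter, Set.mem_setOf_eq, Subtype.forall]
    constructor
    · intro hy z hz
      exact dot_nonneg_of_mem hz hy
    · intro hy
      exact farkas n w y hy
  rw [this]
  refine isClosed_iInter fun z => ?_
  have hcont : Continuous fun y : Fin d → ℝ => (z : Fin d → ℝ) ⬝ᵥ y := by
    unfold dotProduct
    exact continuous_finset_sum _ fun i _ => (continuous_const.mul (continuous_apply i))
  exact isClosed_le continuous_const hcont

/-- coordinatewise cast of a rational vector to a real vector -/
def castV (x : Fin d → ℚ) : Fin d → ℝ := fun i => ((x i : ℚ) : ℝ)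

theorem castV_dot (x y : Fin d → ℚ) : castV x ⬝ᵥ castV y = ((x ⬝ᵥ y : ℚ) : ℝ) := by
  unfold dotProduct castV
  push_cast
  rfl

theorem castV_mem_cone {n : ℕ} {w : Fin n → Fin d → ℚ} {y : Fin d → ℚ}
    (hy : y ∈ cone w) : castV y ∈ cone (fun i => castV (w i)) := by
  obtain ⟨c, hc, rfl⟩ := hy
  refine ⟨fun i => ((c i : ℚ) : ℝ), fun i => by simpa using (Rat.cast_nonneg (K := ℝ)).2 (hc i), ?_⟩
  funext k
  unfold castV
  push_cast
  simp only [Finset.sum_apply, Pi.smul_apply, smul_eq_mul]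
  push_cast
  rfl

end Stmt3Aux

/-- With `Q = C ∩ ℤ^d` for the pointed cone `C` generated by the `ρ_i`,
`G` the associated zonotope, and `τ` a functional nonnegative on `Q` cutting out a facet
`F` of `Q`: every `b ∈ Q` with `τ(b) > τ(a)` can be written `b = b₀ + q` with `q ∈ Q` and
`b₀` a lattice point of `({τ = τ(a)} ∩ ℝ₊D) + G` for some face `D` of `Q` with `D ∩ F = {0}`. -/
theorem stmt3 {d m : ℕ} (ρ : Fin m → (Fin d → ℤ))
    (C : Set (Fin d → ℝ))
    (hC : C = {y | ∃ c : Fin m → ℝ, (∀ i, 0 ≤ c i) ∧ y = ∑ i, c i • toR (ρ i)})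
    (hpointed : C ∩ (-C) = {0})
    (Q : Set (Fin d → ℤ)) (hQ : Q = {q | toR q ∈ C})
    (G : Set (Fin d → ℝ))
    (hG : G = {y | ∃ t : Fin m → ℝ, (∀ i, 0 ≤ t i ∧ t i ≤ 1) ∧ y = ∑ i, t i • toR (ρ i)})
    (τ : (Fin d → ℤ) →ₗ[ℤ] ℤ) (hτpos : ∀ q ∈ Q, 0 ≤ τ q)
    (F : Set (Fin d → ℤ)) (hFdef : F = {q | q ∈ Q ∧ τ q = 0})
    (hfacet : Module.finrank ℝ (Submodule.span ℝ (toR '' F)) = d - 1)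
    (a : Fin d → ℤ) (ha : a ∈ Q)
    (b : Fin d → ℤ) (hb : b ∈ Q) (hba : τ a < τ b) :
    ∃ D : Set (Fin d → ℤ), IsFaceOf Q D ∧ D ∩ F = {0} ∧
      ∃ (b₀ : Fin d → ℤ) (q : Fin d → ℤ), q ∈ Q ∧ b = b₀ + q ∧
        toR b₀ ∈ ({x | extR τ x = (τ a : ℝ)} ∩ nonnegSpan (toR '' D)) + G := by
  classical
  -- basic setup
  set v : Fin m → Fin d → ℝ := fun i => toR (ρ i) with hv
  have hC' : C = Stmt3Aux.cone v := hC
  set tvec : Fin d → ℝ := fun i => ((τ (Pi.single i 1) : ℤ) : ℝ) with htvec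
  have hext : ∀ y : Fin d → ℝ, extR τ y = y ⬝ᵥ tvec := fun y => rfl
  have hrep : ∀ q : Fin d → ℤ, τ q = ∑ i, q i * τ (Pi.single i 1) := by
    intro q
    have h1 : q = ∑ i, Pi.single i (q i) := (Finset.univ_sum_single q).symm
    conv_lhs => rw [h1]
    rw [map_sum]
    congr 1; funext i
    have h2 : Pi.single i (q i) = q i • (Pi.single i (1:ℤ) : Fin d → ℤ) := by
      funext j
      by_cases hji : j = i <;> simp [Pi.single_apply, hji]
    rw [h2, LinearMap.map_smul, smul_eq_mul]
  have htau_cast : ∀ q : Fin d → ℤ, ((τ q : ℤ) : ℝ) = toR q ⬝ᵥ tvec := by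
    intro q
    rw [hrep q]
    push_cast
    simp only [dotProduct, toR, htvec]
  -- toR lemmas
  have toR_zero : toR (0 : Fin d → ℤ) = 0 := by funext k; simp [toR]
  have toR_eq_zero : ∀ q : Fin d → ℤ, toR q = 0 → q = 0 := by
    intro q h; funext k
    have := congrFun h k
    simp only [toR, Pi.zero_apply] at this
    exact_mod_cast this
  have toR_sub : ∀ x y : Fin d → ℤ, toR (x - y) = toR x - toR y := by
    intro x y; funext k; simp [toR]
  have toR_intsum : ∀ z : Fin m → ℤ, toR (∑ j, z j • ρ j) = ∑ j, ((z j : ℤ) : ℝ) • v j := by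
    intro z; funext k
    simp only [toR, Finset.sum_apply, Pi.smul_apply, smul_eq_mul, hv]
    push_cast
    rfl
  -- membership of generators
  have hρQ : ∀ j, ρ j ∈ Q := by
    intro j; rw [hQ]
    exact Set.mem_setOf_eq ▸ (hC' ▸ Stmt3Aux.gen_mem_cone v j : toR (ρ j) ∈ C)
  have h0Q : (0 : Fin d → ℤ) ∈ Q := by
    rw [hQ]; show toR 0 ∈ C; rw [toR_zero, hC']; exact Stmt3Aux.zero_mem_cone v
  have hτρ : ∀ j, 0 ≤ τ (ρ j) := fun j => hτpos _ (hρQ j)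
  have hτv : ∀ j, v j ⬝ᵥ tvec = ((τ (ρ j) : ℤ) : ℝ) := fun j => (htau_cast (ρ j)).symm
  -- starting point
  set bR : Fin d → ℝ := toR b with hbR
  have hbC : bR ∈ Stmt3Aux.cone v := by rw [← hC']; rw [hQ] at hb; exact hb
  set A : ℝ := ((τ a : ℤ) : ℝ) with hA
  have hτa0 : 0 ≤ τ a := hτpos a ha
  have hτb : 0 < τ b := lt_of_le_of_lt hτa0 hba
  have hτbR : (0:ℝ) < ((τ b : ℤ) : ℝ) := by exact_mod_cast hτb
  have hAb : A < ((τ b : ℤ) : ℝ) := by rw [hA]; exact_mod_cast hba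
  have hA0 : 0 ≤ A := by rw [hA]; exact_mod_cast hτa0
  set s : ℝ := A / ((τ b : ℤ) : ℝ) with hs
  have hs0 : 0 ≤ s := div_nonneg hA0 (le_of_lt hτbR)
  have hs1 : s ≤ 1 := (div_le_one hτbR).2 (le_of_lt hAb)
  set x₀ : Fin d → ℝ := s • bR with hx₀
  have hx₀C : x₀ ∈ Stmt3Aux.cone v := Stmt3Aux.smul_mem_cone hs0 hbC
  have hbtau : bR ⬝ᵥ tvec = ((τ b : ℤ) : ℝ) := (htau_cast b).symm
  have hx₀τ : x₀ ⬝ᵥ tvec = A := by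
    rw [hx₀, smul_dotProduct, hbtau, smul_eq_mul, hs, div_mul_cancel₀ _ (ne_of_gt hτbR)]
  have hbx₀ : bR - x₀ ∈ Stmt3Aux.cone v := by
    have h1 : bR - x₀ = (1 - s) • bR := by rw [hx₀, sub_smul, one_smul]
    rw [h1]
    exact Stmt3Aux.smul_mem_cone (by linarith) hbC
  -- the set of "removable directions"
  set U : (Fin d → ℝ) → Finset (Fin m) :=
    fun x => Finset.univ.filter (fun j => ∃ δ : ℝ, 0 < δ ∧ x - δ • v j ∈ Stmt3Aux.cone v)
    with hU
  have hUmem : ∀ x j, j ∈ U x ↔ ∃ δ : ℝ, 0 < δ ∧ x - δ • v j ∈ Stmt3Aux.cone v := by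
    intro x j; rw [hU]; simp
  -- descent
  have descend : ∀ (N : ℕ) (x : Fin d → ℝ), x ∈ Stmt3Aux.cone v → x ⬝ᵥ tvec = A →
      bR - x ∈ Stmt3Aux.cone v → (U x).card ≤ N →
      ∃ x', x' ∈ Stmt3Aux.cone v ∧ x' ⬝ᵥ tvec = A ∧ bR - x' ∈ Stmt3Aux.cone v ∧
        ∀ j ∈ U x', τ (ρ j) = 0 → v j = 0 := by
    intro N
    induction N with
    | zero =>
      intro x hx hxτ hbx hcard
      refine ⟨x, hx, hxτ, hbx, ?_⟩
      intro j hj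
      rw [Finset.card_eq_zero.1 (le_antisymm hcard (Nat.zero_le _))] at hj
      exact absurd hj (Finset.notMem_empty j)
    | succ N IH =>
      intro x hx hxτ hbx hcard
      by_cases hterm : ∀ j ∈ U x, τ (ρ j) = 0 → v j = 0
      · exact ⟨x, hx, hxτ, hbx, hterm⟩
      · push_neg at hterm
        obtain ⟨i, hiU, hiτ, hiv⟩ := hterm
        have hnegvi : -v i ∉ Stmt3Aux.cone v := by
          intro hmem
          have h1 : v i ∈ C ∩ (-C) := by
            refine ⟨hC' ▸ Stmt3Aux.gen_mem_cone v i, ?_⟩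
            rw [Set.mem_neg, hC']
            exact hmem
          rw [hpointed] at h1
          exact hiv h1
        obtain ⟨z, hzw, hzy⟩ := Stmt3Aux.sep hnegvi
        rw [dotProduct_neg] at hzy
        have hzvi : 0 < z ⬝ᵥ v i := by linarith
        set T : Set ℝ := {ε : ℝ | 0 ≤ ε ∧ x - ε • v i ∈ Stmt3Aux.cone v} with hT
        have hT0 : (0:ℝ) ∈ T := by
          refine ⟨le_refl 0, ?_⟩
          simpa using hx
        have hTne : T.Nonempty := ⟨0, hT0⟩
        have hTbdd : BddAbove T := by
          refine ⟨(z ⬝ᵥ x) / (z ⬝ᵥ v i), ?_⟩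
          rintro ε ⟨hε0, hεC⟩
          have h2 : 0 ≤ z ⬝ᵥ (x - ε • v i) := Stmt3Aux.dot_nonneg_of_mem hzw hεC
          rw [dotProduct_sub, dotProduct_smul, smul_eq_mul] at h2
          rw [le_div_iff₀ hzvi]
          linarith
        have hTclosed : IsClosed T := by
          have : T = {ε : ℝ | 0 ≤ ε} ∩ (fun ε : ℝ => x - ε • v i) ⁻¹' (Stmt3Aux.cone v) := rfl
          rw [this]
          refine IsClosed.inter isClosed_Ici ?_
          refine IsClosed.preimage ?_ (Stmt3Aux.isClosed_cone v)
          exact (continuous_const.sub (continuous_id.smul continuous_const))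
        have hsupmem : sSup T ∈ T := hTclosed.csSup_mem hTne hTbdd
        set x' : Fin d → ℝ := x - (sSup T) • v i with hx'
        have hx'C : x' ∈ Stmt3Aux.cone v := hsupmem.2
        have hsup0 : 0 ≤ sSup T := hsupmem.1
        have hx'τ : x' ⬝ᵥ tvec = A := by
          rw [hx', sub_dotProduct, smul_dotProduct, hτv i, hiτ]
          simpa using hxτ
        have hbx' : bR - x' ∈ Stmt3Aux.cone v := by
          have h1 : bR - x' = (bR - x) + (sSup T) • v i := by rw [hx']; module
          rw [h1]
          exact Stmt3Aux.add_mem_cone hbx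
            (Stmt3Aux.smul_mem_cone hsup0 (Stmt3Aux.gen_mem_cone v i))
        have hUsub : U x' ⊆ (U x).erase i := by
          intro j hj
          obtain ⟨δ, hδ, hmem⟩ := (hUmem x' j).1 hj
          refine Finset.mem_erase.2 ⟨?_, ?_⟩
          · rintro rfl
            have h2 : x - (sSup T + δ) • v j ∈ Stmt3Aux.cone v := by
              have h3 : x - (sSup T + δ) • v j = x' - δ • v j := by rw [hx']; module
              rw [h3]; exact hmem
            have h4 : sSup T + δ ≤ sSup T := le_csSup hTbdd ⟨by linarith, h2⟩
            linarith
          · refine (hUmem x j).2 ⟨δ, hδ, ?_⟩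
            have h5 : x - δ • v j = (x' - δ • v j) + (sSup T) • v i := by rw [hx']; module
            rw [h5]
            exact Stmt3Aux.add_mem_cone hmem
              (Stmt3Aux.smul_mem_cone hsup0 (Stmt3Aux.gen_mem_cone v i))
        have hcard' : (U x').card ≤ N := by
          have h1 := Finset.card_le_card hUsub
          have h2 : ((U x).erase i).card = (U x).card - 1 := Finset.card_erase_of_mem hiU
          have h3 : 1 ≤ (U x).card := Finset.card_pos.2 ⟨i, hiU⟩
          omega
        exact IH x' hx'C hx'τ hbx' hcard'
  obtain ⟨x, hxC, hxτ, hbx, hterm⟩ :=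
    descend (U x₀).card x₀ hx₀C hx₀τ hbx₀ le_rfl
  -- support of x
  obtain ⟨p₀, hp₀, hxrep⟩ := hxC
  set S : Finset (Fin m) := Finset.univ.filter (fun k => 0 < p₀ k) with hS
  have hp₀S : ∀ k, k ∉ S → p₀ k = 0 := by
    intro k hk
    rw [hS] at hk
    simp only [Finset.mem_filter, Finset.mem_univ, true_and, not_lt] at hk
    exact le_antisymm hk (hp₀ k)
  -- rational separating functionals
  set rv : Fin m → Fin d → ℚ := fun j k => ((ρ j k : ℤ) : ℚ) with hrv
  have hcast_rv : ∀ j, Stmt3Aux.castV (rv j) = v j := by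
    intro j; funext k; simp [Stmt3Aux.castV, hrv, hv, toR]
  have hratz : ∀ i : Fin m, ∃ z : Fin d → ℚ, (∀ j, 0 ≤ z ⬝ᵥ rv j) ∧
      (∀ k ∈ S, z ⬝ᵥ rv k = 0) ∧ (τ (ρ i) = 0 → v i ≠ 0 → 0 < z ⬝ᵥ rv i) := by
    intro i
    by_cases hi : τ (ρ i) = 0 ∧ v i ≠ 0
    · -- main case
      set W : Fin (m + 1) → Fin d → ℚ := Fin.snoc rv (-∑ k ∈ S, rv k) with hW
      by_cases hmem : -rv i ∈ Stmt3Aux.cone W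
      · exfalso
        obtain ⟨c, hc, hceq⟩ := hmem
        set cR : Fin m → ℝ := fun j => ((c j.castSucc : ℚ) : ℝ) with hcR
        set eR : ℝ := ((c (Fin.last m) : ℚ) : ℝ) with heR
        have hcR0 : ∀ j, 0 ≤ cR j := by
          intro j
          show (0:ℝ) ≤ ((c j.castSucc : ℚ) : ℝ)
          exact_mod_cast hc j.castSucc
        have heR0 : 0 ≤ eR := by
          show (0:ℝ) ≤ ((c (Fin.last m) : ℚ) : ℝ)
          exact_mod_cast hc (Fin.last m)
        have hcast : (-v i : Fin d → ℝ) = (∑ j, cR j • v j) - eR • (∑ k' ∈ S, v k') := by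
          funext kk
          have h1 := congrFun hceq kk
          simp only [Finset.sum_apply, Pi.smul_apply, Pi.neg_apply, smul_eq_mul] at h1
          rw [Fin.sum_univ_castSucc] at h1
          simp only [hW, Fin.snoc_castSucc, Fin.snoc_last, Pi.neg_apply, Finset.sum_apply] at h1
          have h2 := congrArg (fun q : ℚ => (q : ℝ)) h1
          push_cast at h2
          simp only [Pi.neg_apply, Pi.sub_apply, Finset.sum_apply, Pi.smul_apply, smul_eq_mul]
          simp only [hcR, heR, hv, toR, hrv] at h2 ⊢
          push_cast at h2 ⊢
          linarith [h2]
        have hcast' : (∑ j, cR j • v j) = -v i + eR • (∑ k' ∈ S, v k') :=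
          sub_eq_iff_eq_add.1 hcast.symm
        set δbound : Finset ℝ := insert 1 (S.image (fun k' => p₀ k' / (eR + 1))) with hδb
        have hδbne : δbound.Nonempty := ⟨1, Finset.mem_insert_self _ _⟩
        set δ : ℝ := δbound.min' hδbne with hδ
        have hpS : ∀ k' ∈ S, 0 < p₀ k' := by
          intro k' hk'
          rw [hS] at hk'
          exact (Finset.mem_filter.1 hk').2
        have hδpos : 0 < δ := by
          rw [hδ, Finset.lt_min'_iff]
          intro y hy
          rw [hδb] at hy
          rcases Finset.mem_insert.1 hy with h | h
          · rw [h]; norm_num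
          · obtain ⟨k', hk', rfl⟩ := Finset.mem_image.1 h
            have := hpS k' hk'
            positivity
        have hδS : ∀ k' ∈ S, δ * eR ≤ p₀ k' := by
          intro k' hk'
          have h1 : δ ≤ p₀ k' / (eR + 1) := by
            rw [hδ]
            exact Finset.min'_le _ _ (by
              rw [hδb]
              exact Finset.mem_insert_of_mem (Finset.mem_image_of_mem _ hk'))
          have hp := hpS k' hk'
          have h2 : δ * eR ≤ (p₀ k' / (eR + 1)) * eR :=
            mul_le_mul_of_nonneg_right h1 heR0
          have h3 : (p₀ k' / (eR + 1)) * eR ≤ p₀ k' := by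
            rw [div_mul_eq_mul_div, div_le_iff₀ (by linarith : (0:ℝ) < eR + 1)]
            nlinarith
          linarith
        set w' : Fin m → ℝ := fun j => p₀ j + δ * cR j - (if j ∈ S then δ * eR else 0)
          with hw'
        have hw'0 : ∀ j, 0 ≤ w' j := by
          intro j
          show 0 ≤ p₀ j + δ * cR j - (if j ∈ S then δ * eR else 0)
          have h1 := mul_nonneg hδpos.le (hcR0 j)
          by_cases hjS : j ∈ S
          · simp only [hjS, if_true]
            have := hδS j hjS
            linarith
          · simp only [hjS, if_false]
            have := hp₀ j
            linarith
        have hsum1 : ∑ j, w' j • v j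
            = (∑ j, p₀ j • v j) + δ • (∑ j, cR j • v j) - (δ * eR) • (∑ k' ∈ S, v k') := by
          have hA1 : (δ * eR) • (∑ k' ∈ S, v k') = ∑ j, (if j ∈ S then (δ * eR) • v j else 0) := by
            rw [Finset.sum_ite_mem, Finset.univ_inter, Finset.smul_sum]
          rw [Finset.smul_sum, hA1, ← Finset.sum_add_distrib, ← Finset.sum_sub_distrib]
          congr 1
          funext j
          rw [hw']
          show (p₀ j + δ * cR j - (if j ∈ S then δ * eR else 0)) • v j = _
          rw [sub_smul, add_smul, smul_smul]
          congr 1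
          split <;> simp
        have hsum2 : x - δ • v i = ∑ j, w' j • v j := by
          rw [hsum1, ← hxrep, hcast']
          module
        have hmem2 : x - δ • v i ∈ Stmt3Aux.cone v := ⟨w', hw'0, hsum2⟩
        have hiUx : i ∈ U x := (hUmem x i).2 ⟨δ, hδpos, hmem2⟩
        exact hi.2 (hterm i hiUx hi.1)
      · obtain ⟨z, hzW, hzy⟩ := Stmt3Aux.sep hmem
        refine ⟨z, ?_, ?_, ?_⟩
        · intro j
          have := hzW j.castSucc
          rwa [hW, Fin.snoc_castSucc] at this
        · intro k hk
          have hlast := hzW (Fin.last m)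
          rw [hW, Fin.snoc_last, dotProduct_neg] at hlast
          have hsum : (∑ k ∈ S, z ⬝ᵥ rv k) ≤ 0 := by
            rw [← Stmt3Aux.dot_sumf]
            linarith
          have hnn : ∀ k ∈ S, 0 ≤ z ⬝ᵥ rv k := by
            intro k' _
            have := hzW k'.castSucc
            rwa [hW, Fin.snoc_castSucc] at this
          have := (Finset.sum_eq_zero_iff_of_nonneg hnn).1 (le_antisymm hsum
            (Finset.sum_nonneg hnn))
          exact this k hk
        · intro _ _
          rw [dotProduct_neg] at hzy
          linarith
    · refine ⟨0, by simp, by simp, ?_⟩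
      intro h1 h2
      exact absurd ⟨h1, h2⟩ hi
  choose zfun hz1 hz2 hz3 using hratz
  set zQ : Fin d → ℚ := ∑ i, zfun i with hzQ
  have hsumdot : ∀ u : Fin d → ℚ, zQ ⬝ᵥ u = ∑ i, zfun i ⬝ᵥ u := by
    intro u
    rw [hzQ, dotProduct_comm, Stmt3Aux.dot_sumv]
    exact Finset.sum_congr rfl fun i _ => dotProduct_comm _ _
  have hzQ1 : ∀ j, 0 ≤ zQ ⬝ᵥ rv j := fun j => by
    rw [hsumdot]; exact Finset.sum_nonneg fun i _ => hz1 i j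
  have hzQ2 : ∀ k ∈ S, zQ ⬝ᵥ rv k = 0 := fun k hk => by
    rw [hsumdot]; exact Finset.sum_eq_zero fun i _ => hz2 i k hk
  have hzQ3 : ∀ i, τ (ρ i) = 0 → v i ≠ 0 → 0 < zQ ⬝ᵥ rv i := by
    intro i h1 h2
    rw [hsumdot]
    exact lt_of_lt_of_le (hz3 i h1 h2)
      (Finset.single_le_sum (f := fun i' => zfun i' ⬝ᵥ rv i)
        (fun i' _ => hz1 i' i) (Finset.mem_univ i))
  -- clear denominators
  set n0 : ℕ := ∏ k, (zQ k).den with hn0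
  have hn0pos : 0 < n0 := Finset.prod_pos fun k _ => (zQ k).pos
  have hdvd : ∀ k, (zQ k).den ∣ n0 := fun k => Finset.dvd_prod_of_mem _ (Finset.mem_univ k)
  choose tf htf using hdvd
  set zZ : Fin d → ℤ := fun k => (tf k : ℤ) * (zQ k).num with hzZ
  have hzZcast : ∀ k, ((zZ k : ℤ) : ℚ) = (n0 : ℚ) * zQ k := by
    intro k
    show (((tf k : ℤ) * (zQ k).num : ℤ) : ℚ) = (n0:ℚ) * zQ k
    have hden : ((zQ k).den : ℚ) ≠ 0 := by
      exact_mod_cast (zQ k).den_nz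
    have hnum : ((zQ k).num : ℚ) = zQ k * ((zQ k).den : ℚ) := by
      have h1 : (((zQ k).num:ℚ)/((zQ k).den:ℚ)) * ((zQ k).den:ℚ) = ((zQ k).num:ℚ) :=
        div_mul_cancel₀ _ hden
      rw [Rat.num_div_den] at h1
      exact h1.symm
    rw [htf k]
    push_cast
    rw [hnum]
    ring
  have htrans : ∀ j : Fin m, ((zZ ⬝ᵥ ρ j : ℤ) : ℚ) = (n0 : ℚ) * (zQ ⬝ᵥ rv j) := by
    intro j
    unfold dotProduct
    push_cast
    rw [Finset.mul_sum]
    refine Finset.sum_congr rfl fun k _ => ?_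
    rw [hzZcast k]
    simp only [hrv]
    push_cast
    ring
  have hlm1 : ∀ j, 0 ≤ zZ ⬝ᵥ ρ j := by
    intro j
    have h1 : (0:ℚ) ≤ ((zZ ⬝ᵥ ρ j : ℤ):ℚ) := by
      rw [htrans j]
      exact mul_nonneg (by positivity) (hzQ1 j)
    exact_mod_cast h1
  have hlm2 : ∀ k ∈ S, zZ ⬝ᵥ ρ k = 0 := by
    intro k hk
    have h1 : ((zZ ⬝ᵥ ρ k : ℤ):ℚ) = 0 := by rw [htrans k, hzQ2 k hk, mul_zero]
    exact_mod_cast h1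
  have hlm3 : ∀ i, τ (ρ i) = 0 → v i ≠ 0 → 0 < zZ ⬝ᵥ ρ i := by
    intro i h1 h2
    have h3 : (0:ℚ) < ((zZ ⬝ᵥ ρ i : ℤ):ℚ) := by
      rw [htrans i]
      have hn : (0:ℚ) < (n0:ℚ) := by exact_mod_cast hn0pos
      exact mul_pos hn (hzQ3 i h1 h2)
    exact_mod_cast h3
  -- the integral linear functional
  set lam : (Fin d → ℤ) →ₗ[ℤ] ℤ := ∑ k, zZ k • (LinearMap.proj k) with hlamdef
  have hlam : ∀ q : Fin d → ℤ, lam q = zZ ⬝ᵥ q := by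
    intro q
    rw [hlamdef]
    simp [dotProduct, LinearMap.proj_apply, smul_eq_mul]
  set zZR : Fin d → ℝ := fun k => ((zZ k : ℤ) : ℝ) with hzZR
  have hzZRv : ∀ j, zZR ⬝ᵥ v j = ((zZ ⬝ᵥ ρ j : ℤ) : ℝ) := by
    intro j
    unfold dotProduct
    push_cast
    refine Finset.sum_congr rfl fun k _ => ?_
    simp [hzZR, hv, toR]
  have hlam_cast : ∀ q : Fin d → ℤ, ((lam q : ℤ) : ℝ) = zZR ⬝ᵥ toR q := by
    intro q
    rw [hlam]
    unfold dotProduct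
    push_cast
    refine Finset.sum_congr rfl fun k _ => ?_
    simp [hzZR, toR]
  have hzZRpos : ∀ j, 0 ≤ zZR ⬝ᵥ v j := fun j => by
    rw [hzZRv]; exact_mod_cast hlm1 j
  have hlamQ : ∀ q ∈ Q, 0 ≤ lam q := by
    intro q hq
    rw [hQ] at hq
    have hqC : toR q ∈ Stmt3Aux.cone v := hC' ▸ hq
    have h1 : (0:ℝ) ≤ zZR ⬝ᵥ toR q := Stmt3Aux.dot_nonneg_of_mem hzZRpos hqC
    rw [← hlam_cast] at h1
    exact_mod_cast h1
  set D : Set (Fin d → ℤ) := {q | q ∈ Q ∧ lam q = 0} with hD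
  have h0D : (0 : Fin d → ℤ) ∈ D := ⟨h0Q, map_zero lam⟩
  have hface : IsFaceOf Q D := ⟨lam, hlamQ, hD⟩
  have hDF : D ∩ F = {0} := by
    apply Set.eq_singleton_iff_unique_mem.2
    constructor
    · exact ⟨h0D, by rw [hFdef]; exact ⟨h0Q, map_zero τ⟩⟩
    · rintro q ⟨⟨hqQ, hqlam⟩, hqF⟩
      rw [hFdef] at hqF
      have hqτ : τ q = 0 := hqF.2
      rw [hQ] at hqQ
      have hqC : toR q ∈ Stmt3Aux.cone v := hC' ▸ hqQ
      obtain ⟨cq, hcq, hcqe⟩ := hqC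
      have hdotexp : ∀ zz : Fin d → ℝ, zz ⬝ᵥ toR q = ∑ j, cq j * (zz ⬝ᵥ v j) := by
        intro zz
        rw [hcqe, show (∑ j, cq j • v j) = ∑ j, (fun j => cq j • v j) j from rfl,
          Stmt3Aux.dot_sumv]
        exact Finset.sum_congr rfl fun j _ => by rw [dotProduct_smul, smul_eq_mul]
      have e1 : (0:ℝ) = ∑ j, cq j * (zZR ⬝ᵥ v j) := by
        have h1 : ((lam q : ℤ):ℝ) = zZR ⬝ᵥ toR q := hlam_cast q
        rw [hqlam, hdotexp] at h1
        exact_mod_cast h1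
      have e2 : (0:ℝ) = ∑ j, cq j * ((τ (ρ j) : ℤ) : ℝ) := by
        have h1 : ((τ q : ℤ):ℝ) = toR q ⬝ᵥ tvec := htau_cast q
        rw [hqτ, dotProduct_comm, hdotexp] at h1
        have h2 : ∀ j, tvec ⬝ᵥ v j = ((τ (ρ j) : ℤ) : ℝ) := fun j => by
          rw [dotProduct_comm, hτv j]
        rw [Finset.sum_congr rfl (fun j _ => by rw [h2 j])] at h1
        exact_mod_cast h1
      have hzero1 := (Finset.sum_eq_zero_iff_of_nonneg
        (fun j _ => mul_nonneg (hcq j) (hzZRpos j))).1 e1.symm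
      have hzero2 := (Finset.sum_eq_zero_iff_of_nonneg
        (fun j (_ : j ∈ Finset.univ) => mul_nonneg (hcq j)
          (by exact_mod_cast hτρ j : (0:ℝ) ≤ ((τ (ρ j) : ℤ):ℝ)))).1 e2.symm
      have hterm0 : ∀ j, cq j • v j = 0 := by
        intro j
        rcases eq_or_lt_of_le (hcq j) with h | h
        · rw [← h, zero_smul]
        · have hj1 : zZR ⬝ᵥ v j = 0 := by
            have := hzero1 j (Finset.mem_univ j)
            rcases mul_eq_zero.1 this with h' | h'
            · exact absurd h' (ne_of_gt h)
            · exact h'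
          have hj2 : ((τ (ρ j) : ℤ):ℝ) = 0 := by
            have := hzero2 j (Finset.mem_univ j)
            rcases mul_eq_zero.1 this with h' | h'
            · exact absurd h' (ne_of_gt h)
            · exact h'
          have hτj : τ (ρ j) = 0 := by exact_mod_cast hj2
          have hvj : v j = 0 := by
            by_contra hne
            have hpos := hlm3 j hτj hne
            rw [hzZRv j] at hj1
            have : (zZ ⬝ᵥ ρ j) = 0 := by exact_mod_cast hj1
            omega
          rw [hvj, smul_zero]
      have : toR q = 0 := by rw [hcqe]; exact Finset.sum_eq_zero fun j _ => hterm0 j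
      exact toR_eq_zero q this
  -- final decomposition b = b₀ + q
  obtain ⟨ev, hev, heveq⟩ := hbx
  set qlat : Fin d → ℤ := ∑ j, ⌊ev j⌋ • ρ j with hqlat
  have hfl0 : ∀ j, (0:ℤ) ≤ ⌊ev j⌋ := fun j => Int.floor_nonneg.2 (hev j)
  have hqlatR : toR qlat = ∑ j, ((⌊ev j⌋ : ℤ) : ℝ) • v j := toR_intsum _
  have hqlatQ : qlat ∈ Q := by
    rw [hQ]
    show toR qlat ∈ C
    rw [hC', hqlatR]
    exact ⟨fun j => ((⌊ev j⌋:ℤ):ℝ), fun j => by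
      show (0:ℝ) ≤ ((⌊ev j⌋:ℤ):ℝ)
      exact_mod_cast hfl0 j, rfl⟩
  refine ⟨D, hface, hDF, b - qlat, qlat, hqlatQ, (sub_add_cancel b qlat).symm, ?_⟩
  set g : Fin d → ℝ := ∑ j, (ev j - ((⌊ev j⌋:ℤ):ℝ)) • v j with hg
  have hdecomp : toR (b - qlat) = x + g := by
    rw [toR_sub, ← hbR, hqlatR, hg]
    have hsplit : ∑ j, (ev j - ((⌊ev j⌋:ℤ):ℝ)) • v j
        = (∑ j, ev j • v j) - ∑ j, ((⌊ev j⌋:ℤ):ℝ) • v j := by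
      rw [← Finset.sum_sub_distrib]
      exact Finset.sum_congr rfl fun j _ => sub_smul _ _ _
    rw [hsplit, ← heveq]
    abel
  have hgG : g ∈ G := by
    rw [hG]
    refine ⟨fun j => ev j - ((⌊ev j⌋:ℤ):ℝ), fun j => ⟨?_, ?_⟩, ?_⟩
    · show (0:ℝ) ≤ ev j - ((⌊ev j⌋:ℤ):ℝ)
      have := Int.floor_le (ev j)
      linarith
    · show ev j - ((⌊ev j⌋:ℤ):ℝ) ≤ 1
      have := Int.lt_floor_add_one (ev j)
      linarith
    · rw [hg, hv]
  rw [hdecomp]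
  refine Set.add_mem_add ⟨?_, ?_⟩ hgG
  · show extR τ x = ((τ a : ℤ) : ℝ)
    rw [hext x, hxτ]
  · refine ⟨m, fun j => if j ∈ S then v j else 0, p₀, ?_, hp₀, ?_⟩
    · intro j
      by_cases hjS : j ∈ S
      · simp only [hjS, if_true]
        exact ⟨ρ j, ⟨hρQ j, by rw [hlam]; exact hlm2 j hjS⟩, rfl⟩
      · simp only [hjS, if_false]
        exact ⟨0, h0D, toR_zero⟩
    · rw [hxrep]
      refine Finset.sum_congr rfl fun j _ => ?_
      by_cases hjS : j ∈ S
      · simp [hjS]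
      · simp [hjS, hp₀S j hjS]
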